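/- If in addition p is continuous with compact support, then for every x ∈ E the score of the smoothed density satisfies gradient (fun y => Real.log (p_k y)) x = −(1/k^2) • (x − m x), where m x = (p_k x)⁻¹ • ∫ (p a * φ_k (x − a)) • a ∂a is the posterior mean of the clean sample a given the noised sample x (this is Eq. (24): ∇ log p^k(a^k) = −E[(a^k − a)/k² | a^k]; the expression is well defined since p_k x > 0). -/

import Mathlib

open MeasureTheory

set_option maxHeartbeats 1000000 in
set_option synthInstance.maxHeartbeats 400000 in
/-- Score of the Gaussian-smoothed density (Eq. (24)): if the probability density `p` is
continuous with compact support, then for every `x` the score of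
`p_k(x) = ∫ p a * φ_k (x − a) ∂a` satisfies
`∇ log p_k x = −(1/k²) • (x − m x)`, where
`m x = (p_k x)⁻¹ • ∫ (p a * φ_k (x − a)) • a ∂a` is the posterior mean of the clean sample
given the noised sample `x`; i.e. `∇ log p^k(a^k) = −E[(a^k − a)/k² | a^k]`. -/
theorem gradient_log_gaussian_smoothed_density
    (n : ℕ) (hn : 0 < n) (k : ℝ) (hk : 0 < k)
    (φ : EuclideanSpace ℝ (Fin n) → ℝ)
    (hφ : ∀ x, φ x = (2 * Real.pi * k ^ 2) ^ (-(n : ℝ) / 2) *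
        Real.exp (-‖x‖ ^ 2 / (2 * k ^ 2)))
    (p : EuclideanSpace ℝ (Fin n) → ℝ)
    (hpmeas : Measurable p) (hpnonneg : ∀ a, 0 ≤ p a) (hpint : ∫ a, p a = 1)
    (hpcont : Continuous p) (hpsupp : HasCompactSupport p)
    (pk : EuclideanSpace ℝ (Fin n) → ℝ)
    (hpk : ∀ x, pk x = ∫ a, p a * φ (x - a))
    (m : EuclideanSpace ℝ (Fin n) → EuclideanSpace ℝ (Fin n))
    (hm : ∀ x, m x = (pk x)⁻¹ • ∫ a, (p a * φ (x - a)) • a) :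
    ∀ x : EuclideanSpace ℝ (Fin n),
      gradient (fun y => Real.log (pk y)) x = -(1 / k ^ 2) • (x - m x) := by
  intro x
  have hk2 : (0:ℝ) < k ^ 2 := by positivity
  set c : ℝ := (2 * Real.pi * k ^ 2) ^ (-(n : ℝ) / 2) with hc
  have hcpos : 0 < c := Real.rpow_pos_of_pos (by positivity) _
  have hφpos : ∀ y, 0 < φ y := fun y => by
    rw [hφ]; exact mul_pos hcpos (Real.exp_pos _)
  have hφeq : φ = fun y => c * Real.exp (-‖y‖ ^ 2 / (2 * k ^ 2)) := funext hφ
  have hφcont : Continuous φ := by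
    rw [hφeq]
    exact continuous_const.mul (Real.continuous_exp.comp (by fun_prop))
  -- derivative of φ
  have hφderiv : ∀ y : EuclideanSpace ℝ (Fin n),
      HasFDerivAt φ ((-(k ^ 2)⁻¹ * φ y) • innerSL ℝ y) y := by
    intro y
    have h1 : HasFDerivAt (fun y : EuclideanSpace ℝ (Fin n) => ‖y‖ ^ 2) (2 • innerSL ℝ y) y :=
      (hasStrictFDerivAt_norm_sq y).hasFDerivAt
    have h2 := (h1.neg).const_smul ((2 * k ^ 2)⁻¹)
    have h3 : HasDerivAt Real.exp (Real.exp ((2 * k ^ 2)⁻¹ • -‖y‖ ^ 2))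
        ((2 * k ^ 2)⁻¹ • -‖y‖ ^ 2) := Real.hasDerivAt_exp _
    have h4 := (h3.comp_hasFDerivAt y h2).const_mul c
    have hfun2 : φ = fun y : EuclideanSpace ℝ (Fin n) =>
        c * Real.exp ((2 * k ^ 2)⁻¹ • -‖y‖ ^ 2) := by
      rw [hφeq]
      funext z
      rw [smul_eq_mul]
      ring_nf
    rw [hfun2]
    refine h4.congr_fderiv ?_
    ext w
    simp only [ContinuousLinearMap.coe_smul', Pi.smul_apply, ContinuousLinearMap.coe_smul,
      ContinuousLinearMap.neg_apply, smul_eq_mul, innerSL_apply_apply, hφ y, hc,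
      ContinuousLinearMap.smul_apply, nsmul_eq_mul, Nat.cast_ofNat]
    ring
  -- derivative of x ↦ p a * φ (x - a)
  have hFd : ∀ (a x : EuclideanSpace ℝ (Fin n)),
      HasFDerivAt (fun x : EuclideanSpace ℝ (Fin n) => p a * φ (x - a))
      ((p a * (-(k ^ 2)⁻¹ * φ (x - a))) • innerSL ℝ (x - a)) x := by
    intro a x
    have h1 := (hφderiv (x - a)).comp x ((hasFDerivAt_id x).sub_const a)
    have h2 := h1.const_mul (p a)
    refine h2.congr_fderiv ?_
    ext w
    simp only [ContinuousLinearMap.coe_smul', Pi.smul_apply, ContinuousLinearMap.coe_comp',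
      Function.comp_apply, smul_eq_mul, innerSL_apply_apply, ContinuousLinearMap.smul_apply]
    ring_nf
    rfl
  -- integrability facts
  have hFcont : ∀ x : EuclideanSpace ℝ (Fin n),
      Continuous (fun a : EuclideanSpace ℝ (Fin n) => p a * φ (x - a)) := fun x =>
    hpcont.mul (hφcont.comp (continuous_const.sub continuous_id))
  have hFsupp : ∀ x : EuclideanSpace ℝ (Fin n),
      HasCompactSupport (fun a : EuclideanSpace ℝ (Fin n) => p a * φ (x - a)) := fun x =>
    hpsupp.mul_right
  have hFint : ∀ x : EuclideanSpace ℝ (Fin n),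
      Integrable (fun a : EuclideanSpace ℝ (Fin n) => p a * φ (x - a)) := fun x =>
    (hFcont x).integrable_of_hasCompactSupport (hFsupp x)
  -- positivity of pk x
  have hpkpos : 0 < pk x := by
    rw [hpk]
    have hsupp : Function.support (fun a : EuclideanSpace ℝ (Fin n) => p a * φ (x - a)) =
        Function.support p := by
      ext a
      simp [Function.mem_support, mul_ne_zero_iff, (hφpos (x - a)).ne']
    refine (integral_pos_iff_support_of_nonneg
      (fun a => mul_nonneg (hpnonneg a) (hφpos _).le) (hFint x)).mpr ?_
    rw [hsupp]
    have hpint' : Integrable p := hpcont.integrable_of_hasCompactSupport hpsupp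
    exact (integral_pos_iff_support_of_nonneg hpnonneg hpint').mp (by rw [hpint]; norm_num)
  have hpkne : pk x ≠ 0 := hpkpos.ne'
  -- elementary bound
  have key : ∀ t : ℝ, 0 ≤ t → Real.exp (-t ^ 2 / (2 * k ^ 2)) * t ≤ k := by
    intro t ht
    set s := t ^ 2 / (2 * k ^ 2) with hsdef
    have hs : 2 * k ^ 2 * s = t ^ 2 := by rw [hsdef]; field_simp
    have h2 : s + 1 ≤ Real.exp s := Real.add_one_le_exp _
    have h3 : t ≤ Real.exp s * k := by
      nlinarith [mul_le_mul_of_nonneg_left h2 hk.le, sq_nonneg (t - k), hk]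
    rw [neg_div, Real.exp_neg, inv_mul_le_iff₀ (Real.exp_pos _)]
    exact h3
  -- the (global) bound on the derivative
  have hbnd : ∀ (x a : EuclideanSpace ℝ (Fin n)),
      ‖(p a * (-(k ^ 2)⁻¹ * φ (x - a))) • innerSL ℝ (x - a)‖ ≤ p a * (c / k) := by
    intro x a
    rw [← (innerSL ℝ).map_smul, innerSL_apply_norm, norm_smul]
    have h1 : ‖p a * (-(k ^ 2)⁻¹ * φ (x - a))‖ = p a * ((k ^ 2)⁻¹ * φ (x - a)) := by
      rw [Real.norm_eq_abs, abs_mul, abs_of_nonneg (hpnonneg a), abs_mul, abs_neg, abs_inv,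
        abs_of_nonneg hk2.le, abs_of_nonneg (hφpos _).le]
    rw [h1]
    have h2 : (k ^ 2)⁻¹ * φ (x - a) * ‖x - a‖ ≤ c / k := by
      rw [hφ]
      have h3 := key ‖x - a‖ (norm_nonneg _)
      calc (k ^ 2)⁻¹ * (c * Real.exp (-‖x - a‖ ^ 2 / (2 * k ^ 2))) * ‖x - a‖
          = (k ^ 2)⁻¹ * c * (Real.exp (-‖x - a‖ ^ 2 / (2 * k ^ 2)) * ‖x - a‖) := by ring
        _ ≤ (k ^ 2)⁻¹ * c * k :=
            mul_le_mul_of_nonneg_left h3 (mul_nonneg (by positivity) hcpos.le)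
        _ = c / k := by field_simp
    calc p a * ((k ^ 2)⁻¹ * φ (x - a)) * ‖x - a‖
        = p a * ((k ^ 2)⁻¹ * φ (x - a) * ‖x - a‖) := by ring
      _ ≤ p a * (c / k) := by gcongr; exact hpnonneg a
  -- continuity of the derivative integrand
  have hF'cont : Continuous (fun a : EuclideanSpace ℝ (Fin n) =>
      (p a * (-(k ^ 2)⁻¹ * φ (x - a))) • innerSL ℝ (x - a)) := by
    exact ((hpcont.mul (continuous_const.mul
      (hφcont.comp (continuous_const.sub continuous_id)))).smul
      ((innerSL ℝ).continuous.comp (continuous_const.sub continuous_id)))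
  -- differentiation under the integral sign
  have hderiv : HasFDerivAt (fun x : EuclideanSpace ℝ (Fin n) => ∫ a, p a * φ (x - a))
      (∫ a, (p a * (-(k ^ 2)⁻¹ * φ (x - a))) • innerSL ℝ (x - a)) x := by
    refine hasFDerivAt_integral_of_dominated_of_fderiv_le (s := Set.univ)
      (bound := fun a => p a * (c / k)) Filter.univ_mem
      (Filter.Eventually.of_forall fun y => (hFcont y).aestronglyMeasurable)
      (hFint x) (hF'cont.aestronglyMeasurable)
      (Filter.Eventually.of_forall fun a => fun y _ => hbnd y a)
      ?_ (Filter.Eventually.of_forall fun a => fun y _ => hFd a y)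
    exact ((hpcont.mul continuous_const).integrable_of_hasCompactSupport hpsupp.mul_right)
  -- the vector form of the derivative
  have hgcont : Continuous (fun a : EuclideanSpace ℝ (Fin n) =>
      (p a * (-(k ^ 2)⁻¹ * φ (x - a))) • (x - a)) := by
    exact ((hpcont.mul (continuous_const.mul
      (hφcont.comp (continuous_const.sub continuous_id)))).smul
      (continuous_const.sub continuous_id))
  have hgint : Integrable (fun a : EuclideanSpace ℝ (Fin n) =>
      (p a * (-(k ^ 2)⁻¹ * φ (x - a))) • (x - a)) := by
    apply hgcont.integrable_of_hasCompactSupport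
    exact (hpsupp.mul_right).smul_right
  have hvec : (∫ a, (p a * (-(k ^ 2)⁻¹ * φ (x - a))) • innerSL ℝ (x - a)) =
      innerSL ℝ (∫ a, (p a * (-(k ^ 2)⁻¹ * φ (x - a))) • (x - a)) := by
    rw [← ContinuousLinearMap.integral_comp_comm (innerSL ℝ) hgint]
    congr 1
    funext a
    exact ((innerSL ℝ).map_smul _ _).symm
  have htd : ∀ v : EuclideanSpace ℝ (Fin n),
      InnerProductSpace.toDual ℝ (EuclideanSpace ℝ (Fin n)) v = innerSL ℝ v := by
    intro v
    ext w
    rw [InnerProductSpace.toDual_apply_apply, innerSL_apply_apply]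
  have hgrad : HasGradientAt pk (∫ a, (p a * (-(k ^ 2)⁻¹ * φ (x - a))) • (x - a)) x := by
    rw [hasGradientAt_iff_hasFDerivAt, htd, ← hvec]
    have hpk' : pk = fun x => ∫ a, p a * φ (x - a) := funext hpk
    rw [hpk']
    exact hderiv
  -- gradient of log pk
  have hlog : HasGradientAt (fun y => Real.log (pk y))
      ((pk x)⁻¹ • ∫ a, (p a * (-(k ^ 2)⁻¹ * φ (x - a))) • (x - a)) x := by
    rw [hasGradientAt_iff_hasFDerivAt, htd]
    have h1 : HasDerivAt Real.log (pk x)⁻¹ (pk x) := Real.hasDerivAt_log hpkne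
    have h2 := h1.comp_hasFDerivAt x (hasGradientAt_iff_hasFDerivAt.mp hgrad)
    rw [htd] at h2
    refine h2.congr_fderiv ?_
    exact ((innerSL ℝ).map_smul _ _).symm
  rw [hlog.gradient]
  -- final algebra
  have hsplit : (∫ a, (p a * (-(k ^ 2)⁻¹ * φ (x - a))) • (x - a)) =
      (-(k ^ 2)⁻¹) • ((pk x) • x - ∫ a, (p a * φ (x - a)) • a) := by
    have h1 : ∀ a : EuclideanSpace ℝ (Fin n),
        (p a * (-(k ^ 2)⁻¹ * φ (x - a))) • (x - a) =
        (-(k ^ 2)⁻¹) • ((p a * φ (x - a)) • x - (p a * φ (x - a)) • a) := by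
      intro a
      rw [← smul_sub, smul_smul]
      congr 1
      ring
    rw [show (∫ a, (p a * (-(k ^ 2)⁻¹ * φ (x - a))) • (x - a)) =
        ∫ a, (-(k ^ 2)⁻¹) • ((p a * φ (x - a)) • x - (p a * φ (x - a)) • a)
        from by simp_rw [h1]]
    rw [integral_smul]
    congr 1
    have hint1 : Integrable (fun a : EuclideanSpace ℝ (Fin n) => (p a * φ (x - a)) • x) :=
      (hFint x).smul_const x
    have hint2 : Integrable (fun a : EuclideanSpace ℝ (Fin n) => (p a * φ (x - a)) • a) := by
      apply Continuous.integrable_of_hasCompactSupport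
      · exact (hFcont x).smul continuous_id
      · exact (hFsupp x).smul_right
    rw [integral_sub hint1 hint2, integral_smul_const, ← hpk x]
  rw [hsplit, hm]
  rw [smul_comm ((pk x)⁻¹) (-(k ^ 2)⁻¹), smul_sub, smul_smul, inv_mul_cancel₀ hpkne, one_smul]
  rw [one_div]
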